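/- Combining winning strategies via bisimilar exit positions yields a winning strategy: let (G, v₀) be a parity game, and suppose there is a set S of positions closed in the following sense: every play from v₀ either stays in S forever or has a first exit position outside S. If Eve has a strategy σ such that (a) every outcome of σ that remains in S forever is winning, and (b) every first-exit position of an outcome of σ is a winning position for Eve, then Eve has a winning strategy from v₀. -/

import Mathlib

/-- A parity game arena: positions partitioned between Eve (`eve`) and Adam,
a total move relation `E`, and a colouring `C`. -/
structure Arena (V : Type*) where
  eve : V → Prop
  E : V → V → Prop
  total : ∀ v, ∃ u, E v u
  C : V → ℕ

/-- An infinite play from `v0`. -/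
def IsPlay {V : Type*} (G : Arena V) (v0 : V) (π : ℕ → V) : Prop :=
  π 0 = v0 ∧ ∀ i, G.E (π i) (π (i + 1))

/-- A strategy (for Eve) maps finite plays ending in an Eve position to a successor. -/
def LegalStrat {V : Type*} (G : Arena V) (σ : List V → V) : Prop :=
  ∀ (ρ : List V) (v : V), G.eve v → G.E v (σ (ρ ++ [v]))

/-- The play `π` is consistent with Eve's strategy `σ`. -/
def Follows {V : Type*} (G : Arena V) (σ : List V → V) (π : ℕ → V) : Prop :=
  ∀ i, G.eve (π i) → π (i + 1) = σ (List.ofFn fun j : Fin (i + 1) => π j)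

/-- Colour `c` occurs infinitely often along `π`. -/
def InfOften {V : Type*} (G : Arena V) (π : ℕ → V) (c : ℕ) : Prop :=
  {i | G.C (π i) = c}.Infinite

/-- Eve wins a play if the least colour occurring infinitely often is even. -/
def EveWins {V : Type*} (G : Arena V) (π : ℕ → V) : Prop :=
  ∃ c, InfOften G π c ∧ Even c ∧ ∀ c', InfOften G π c' → c ≤ c'

/-- Eve has a winning strategy in the parity game `(G, v0)`. -/
def WinsFrom {V : Type*} (G : Arena V) (v0 : V) : Prop :=
  ∃ σ : List V → V, LegalStrat G σ ∧
    ∀ π : ℕ → V, IsPlay G v0 π → Follows G σ π → EveWins G π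

/-- A bisimulation between two parity game arenas. -/
structure IsBisim {V V' : Type*} (G : Arena V) (G' : Arena V') (Z : V → V' → Prop) : Prop where
  colour : ∀ v v', Z v v' → G.C v = G'.C v'
  player : ∀ v v', Z v v' → (G.eve v ↔ G'.eve v')
  zig : ∀ v v' u, Z v v' → G.E v u → ∃ u', G'.E v' u' ∧ Z u u'
  zag : ∀ v v' u', Z v v' → G'.E v' u' → ∃ u, G.E v u ∧ Z u u'

open Classical

section Aux
variable {V : Type*}

noncomputable def defaultStrat (G : Arena V) (d : V) : List V → V :=
  fun l => Classical.choose (G.total (l.getLastD d))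

lemma defaultStrat_legal (G : Arena V) (d : V) : LegalStrat G (defaultStrat G d) := by
  intro ρ v hv
  have h : (ρ ++ [v]).getLastD d = v := by
    simp [List.getLastD_eq_getLast?, List.getLast?_append]
  unfold defaultStrat
  have key : ∀ w, w = v → G.E v (Classical.choose (G.total w)) := by
    rintro w rfl
    exact Classical.choose_spec (G.total w)
  exact key _ h

noncomputable def pickStrat (G : Arena V) (d : V) (v : V) : List V → V :=
  if h : WinsFrom G v then h.choose else defaultStrat G d

lemma pickStrat_legal (G : Arena V) (d v : V) : LegalStrat G (pickStrat G d v) := by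
  unfold pickStrat
  split
  · next h => exact h.choose_spec.1
  · exact defaultStrat_legal G d

lemma pickStrat_wins (G : Arena V) (d v : V) (hw : WinsFrom G v) :
    ∀ π : ℕ → V, IsPlay G v π → Follows G (pickStrat G d v) π → EveWins G π := by
  unfold pickStrat
  rw [dif_pos hw]
  exact hw.choose_spec.2

lemma ofFn_getD {n : ℕ} (f : Fin n → V) (j : ℕ) (hj : j < n) (d : V) :
    (List.ofFn f).getD j d = f ⟨j, hj⟩ := by
  rw [List.getD_eq_getElem _ _ (by simpa using hj), List.getElem_ofFn]

lemma ofFn_succ_concat (f : ℕ → V) (i : ℕ) :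
    (List.ofFn fun j : Fin (i + 1) => f j) = (List.ofFn fun j : Fin i => f j) ++ [f i] := by
  rw [List.ofFn_succ']
  simp [List.concat_eq_append]

noncomputable def combStrat (G : Arena V) (d : V) (S : Set V) (σ : List V → V) : List V → V :=
  fun ρ => if h : ∃ k, k < ρ.length ∧ ρ.getD k d ∉ S
    then pickStrat G d (ρ.getD (Nat.find h) d) (ρ.drop (Nat.find h))
    else σ ρ

lemma combStrat_no_exit (G : Arena V) (d : V) (S : Set V) (σ : List V → V) (ρ : List V)
    (h : ∀ k < ρ.length, ρ.getD k d ∈ S) : combStrat G d S σ ρ = σ ρ := by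
  unfold combStrat
  rw [dif_neg]
  rintro ⟨k, hk, hout⟩
  exact hout (h k hk)

lemma combStrat_exit (G : Arena V) (d : V) (S : Set V) (σ : List V → V) (ρ : List V)
    (k : ℕ) (hk : k < ρ.length) (hout : ρ.getD k d ∉ S) (hmin : ∀ j < k, ρ.getD j d ∈ S) :
    combStrat G d S σ ρ = pickStrat G d (ρ.getD k d) (ρ.drop k) := by
  unfold combStrat
  have hex : ∃ j, j < ρ.length ∧ ρ.getD j d ∉ S := ⟨k, hk, hout⟩
  rw [dif_pos hex]
  have hfind : Nat.find hex = k := by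
    have h1 : Nat.find hex ≤ k := Nat.find_min' hex ⟨hk, hout⟩
    rcases lt_or_eq_of_le h1 with h2 | h2
    · exact absurd (hmin _ h2) (Nat.find_spec hex).2
    · exact h2
  rw [hfind]

noncomputable def extPlay (G : Arena V) (σ : List V → V) (π : ℕ → V) (k : ℕ) : ℕ → V
  | n =>
    if n ≤ k then π n
    else
      if G.eve (extPlay G σ π k (n - 1)) then σ (List.ofFn fun j : Fin n => extPlay G σ π k j)
      else Classical.choose (G.total (extPlay G σ π k (n - 1)))
  termination_by n => n
  decreasing_by all_goals omega

lemma extPlay_eq (G : Arena V) (σ : List V → V) (π : ℕ → V) (k n : ℕ) :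
    extPlay G σ π k n =
      if n ≤ k then π n
      else
        if G.eve (extPlay G σ π k (n - 1)) then σ (List.ofFn fun j : Fin n => extPlay G σ π k j)
        else Classical.choose (G.total (extPlay G σ π k (n - 1))) := by
  conv_lhs => rw [extPlay]

lemma extPlay_of_le (G : Arena V) (σ : List V → V) (π : ℕ → V) (k n : ℕ) (h : n ≤ k) :
    extPlay G σ π k n = π n := by
  rw [extPlay_eq, if_pos h]

lemma infOften_shift (G : Arena V) (π : ℕ → V) (k c : ℕ) :
    InfOften G (fun j => π (k + j)) c ↔ InfOften G π c := by
  constructor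
  · intro h
    refine Set.Infinite.mono ?_ (h.image ((add_right_injective k).injOn))
    rintro i ⟨j, hj, rfl⟩
    exact hj
  · intro h
    have h2 : ({i | G.C (π i) = c} \ Set.Iio k).Infinite := h.diff (Set.finite_Iio k)
    have hinj : Set.InjOn (fun i => i - k) ({i | G.C (π i) = c} \ Set.Iio k) := by
      intro a ha b hb hab
      simp only [Set.mem_diff, Set.mem_Iio, not_lt] at ha hb
      dsimp at hab
      omega
    refine Set.Infinite.mono ?_ (h2.image hinj)
    rintro j ⟨i, ⟨hi, hik⟩, rfl⟩
    simp only [Set.mem_Iio, not_lt] at hik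
    simp only [Set.mem_setOf_eq]
    have : k + (i - k) = i := by omega
    rw [this]
    exact hi

lemma eveWins_shift (G : Arena V) (π : ℕ → V) (k : ℕ)
    (h : EveWins G (fun j => π (k + j))) : EveWins G π := by
  obtain ⟨c, hc, he, hm⟩ := h
  exact ⟨c, (infOften_shift G π k c).1 hc, he,
    fun c' h' => hm c' ((infOften_shift G π k c').2 h')⟩

lemma ofFn_drop (π : ℕ → V) (k m : ℕ) :
    (List.ofFn fun j : Fin (k + m) => π j).drop k = List.ofFn fun j : Fin m => π (k + j) := by
  rw [List.ofFn_add, List.drop_left' (by simp)]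
  rfl

end Aux

/-- Combining winning strategies at exit positions: suppose every play from `v0`
either stays in `S` forever or has a first exit position outside `S`, and Eve has
a strategy `σ` such that (a) every outcome of `σ` staying in `S` forever is winning,
and (b) every first-exit position of an outcome of `σ` is a winning position for
Eve. Then Eve has a winning strategy from `v0`. -/
theorem combine_strategies_at_exits {V : Type*} (G : Arena V) (v0 : V) (S : Set V)
    (hclosed : ∀ π : ℕ → V, IsPlay G v0 π →
      (∀ i, π i ∈ S) ∨ ∃ k, π k ∉ S ∧ ∀ j < k, π j ∈ S)
    (σ : List V → V) (hleg : LegalStrat G σ)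
    (hstay : ∀ π : ℕ → V, IsPlay G v0 π → Follows G σ π → (∀ i, π i ∈ S) → EveWins G π)
    (hexit : ∀ (π : ℕ → V) (k : ℕ), IsPlay G v0 π → Follows G σ π →
      π k ∉ S → (∀ j < k, π j ∈ S) → WinsFrom G (π k)) :
    WinsFrom G v0 := by
  classical
  refine ⟨combStrat G v0 S σ, ?_, ?_⟩
  · -- legality
    intro ρ v hv
    by_cases h : ∀ j < (ρ ++ [v]).length, (ρ ++ [v]).getD j v0 ∈ S
    · rw [combStrat_no_exit G v0 S σ _ h]
      exact hleg ρ v hv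
    · push_neg at h
      have hex : ∃ j, j < (ρ ++ [v]).length ∧ (ρ ++ [v]).getD j v0 ∉ S := by
        obtain ⟨j, hj, hout⟩ := h
        exact ⟨j, hj, hout⟩
      set k := Nat.find hex with hk
      have hspec := Nat.find_spec hex
      have hmin : ∀ j < k, (ρ ++ [v]).getD j v0 ∈ S := by
        intro j hj
        by_contra hns
        exact Nat.find_min hex hj ⟨lt_trans hj hspec.1, hns⟩
      rw [combStrat_exit G v0 S σ _ k hspec.1 hspec.2 hmin]
      have hkle : k ≤ ρ.length := by
        have h1 := hspec.1
        have h2 : (ρ ++ [v]).length = ρ.length + 1 := by simp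
        omega
      rw [List.drop_append_of_le_length hkle]
      exact pickStrat_legal G v0 _ _ v hv
  · -- winning
    intro π hplay hfol
    rcases hclosed π hplay with hin | ⟨k, hout, hmin⟩
    · -- stays in S: follows σ
      have hfσ : Follows G σ π := by
        intro i hi
        rw [hfol i hi, combStrat_no_exit G v0 S σ _ ?_]
        intro j hj
        simp only [List.length_ofFn] at hj
        rw [ofFn_getD _ j hj]
        exact hin j
      exact hstay π hplay hfσ hin
    · -- exits S at k (first exit)
      -- π follows σ strictly before k
      have hfolσ : ∀ i < k, G.eve (π i) → π (i + 1) = σ (List.ofFn fun j : Fin (i + 1) => π j) := by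
        intro i hik hi
        rw [hfol i hi, combStrat_no_exit G v0 S σ _ ?_]
        intro j hj
        simp only [List.length_ofFn] at hj
        rw [ofFn_getD _ j hj]
        exact hmin j (by omega)
      -- the extended play following σ forever
      set π' := extPlay G σ π k with hπ'
      have he1 : ∀ n ≤ k, π' n = π n := fun n hn => extPlay_of_le G σ π k n hn
      have hstep : ∀ n, ¬ n + 1 ≤ k → π' (n + 1) =
          if G.eve (π' n) then σ (List.ofFn fun j : Fin (n + 1) => π' j)
          else Classical.choose (G.total (π' n)) := by
        intro n hn
        conv_lhs => rw [hπ', extPlay_eq G σ π k (n + 1)]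
        rw [if_neg hn]
        simp only [Nat.add_sub_cancel]
        rfl
      have hplay' : IsPlay G v0 π' := by
        constructor
        · rw [he1 0 (Nat.zero_le k)]; exact hplay.1
        · intro i
          by_cases hik : i + 1 ≤ k
          · rw [he1 i (by omega), he1 (i + 1) hik]
            exact hplay.2 i
          · rw [hstep i hik]
            split
            · next he =>
              rw [ofFn_succ_concat π' i]
              exact hleg _ _ he
            · next he => exact Classical.choose_spec (G.total (π' i))
      have hfol' : Follows G σ π' := by
        intro i hi
        by_cases hik : i + 1 ≤ k
        · have hfun : (fun j : Fin (i + 1) => π' j) = fun j : Fin (i + 1) => π j :=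
            funext fun j => he1 j (lt_of_lt_of_le j.isLt hik).le
          rw [he1 (i + 1) hik, hfun]
          exact hfolσ i (by omega) (by rwa [he1 i (by omega)] at hi)
        · rw [hstep i hik, if_pos hi]
      have hw : WinsFrom G (π k) := by
        have := hexit π' k hplay' hfol'
          (by rw [he1 k le_rfl]; exact hout)
          (by intro j hj; rw [he1 j (le_of_lt hj)]; exact hmin j hj)
        rwa [he1 k le_rfl] at this
      -- the shifted play follows pickStrat G v0 (π k)
      refine eveWins_shift G π k ?_
      refine pickStrat_wins G v0 (π k) hw _ ⟨rfl, fun i => hplay.2 (k + i)⟩ ?_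
      intro i hi
      have := hfol (k + i) hi
      rw [combStrat_exit G v0 S σ _ k (by simp)
        (by rw [ofFn_getD _ k (by omega)]; exact hout)
        (by intro j hj; rw [ofFn_getD _ j (by omega)]; exact hmin j hj)] at this
      rw [ofFn_getD _ k (by omega)] at this
      show π (k + i + 1) = _
      rw [this]
      congr 1
      have := ofFn_drop π k (i + 1)
      exact this
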